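/- Suppose n, m, k ∈ ℕ satisfy 2^k < n ≤ 2^{k+1} and 2^k < m (Player 1 has the upper hand at level k). Then for every b ∈ ℕ with 1 ≤ b ≤ n−1, one has 1 − (b/n)·q(m,b) − ((n−b)/n)·q(m,n−b) ≤ q_{U_k}(n,m), and equality holds when b = ⌊n/2⌋. Consequently q_{U_k}(n,m) = max_{b ∈ {1,…,n−1}} (1 − (b/n)·q(m,b) − ((n−b)/n)·q(m,n−b)). -/

import Mathlib

/-- The candidate value function when Player 1 is in the weeds at level `k`. -/
def qW (k n m : ℕ) : ℚ :=
  2 ^ (k + 1) / (n : ℚ) - 2 / 3 * (2 ^ (2 * k + 1) + 1) / ((m : ℚ) * (n : ℚ))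

/-- The candidate value function when Player 1 has the upper hand at level `k`. -/
def qU (k n m : ℕ) : ℚ :=
  1 - 2 ^ k / (m : ℚ) + 2 / 3 * (2 ^ (2 * k) + 2) / ((m : ℚ) * (n : ℚ))

/-- The candidate value function `q` for "Guess Who?": `q 1 m = 1` (for `m ≥ 2`),
`q n 1 = 0` (for `n ≥ 2`); for `n, m ≥ 2`, with `k = ⌊log₂ (m-1)⌋` (so that
`2^k < m ≤ 2^(k+1)`), `q n m = qW k n m` if `n > 2^(k+1)` (in the weeds at level `k`),
and otherwise `q n m = qU k' n m` with `k' = ⌊log₂ (n-1)⌋` (so `2^k' < n ≤ 2^(k'+1)`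
and `2^k' < m`: the upper hand at level `k'`). -/
def q (n m : ℕ) : ℚ :=
  if n ≤ 1 then 1
  else if m ≤ 1 then 0
  else if 2 ^ (Nat.log 2 (m - 1) + 1) < n then qW (Nat.log 2 (m - 1)) n m
  else qU (Nat.log 2 (n - 1)) n m

lemma q_one (m : ℕ) (hm : 2 ≤ m) : q m 1 = 0 := by
  simp [q, Nat.not_le.mpr (by omega : 1 < m)]

lemma q_eq_qW (m b : ℕ) (hb : 2 ≤ b) (hm : 2 ^ (Nat.log 2 (b - 1) + 1) < m) :
    q m b = qW (Nat.log 2 (b - 1)) m b := by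
  have hm2 : ¬ m ≤ 1 := by
    have : 2 ≤ 2 ^ (Nat.log 2 (b - 1) + 1) := by
      have := Nat.one_le_two_pow (n := Nat.log 2 (b - 1))
      calc 2 = 2 * 1 := rfl
        _ ≤ 2 ^ (Nat.log 2 (b-1)) * 2 := by nlinarith
        _ = 2 ^ (Nat.log 2 (b-1) + 1) := by ring
    omega
  simp [q, hm2, hm, Nat.not_le.mpr (by omega : 1 < b)]

lemma q_eq_qU (m b : ℕ) (hb : 2 ≤ b) (hm : 2 ≤ m)
    (h : ¬ 2 ^ (Nat.log 2 (b - 1) + 1) < m) :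
    q m b = qU (Nat.log 2 (m - 1)) m b := by
  simp [q, h, Nat.not_le.mpr (by omega : 1 < b), Nat.not_le.mpr (by omega : 1 < m)]

lemma mul_qW (j m b : ℕ) (hm : 0 < m) (hb : 0 < b) :
    (m : ℚ) * b * qW j m b = (b : ℚ) * 2 ^ (j + 1) - 2 / 3 * (2 ^ (2 * j + 1) + 1) := by
  have hm0 : (m : ℚ) ≠ 0 := by positivity
  have hb0 : (b : ℚ) ≠ 0 := by positivity
  rw [qW]
  field_simp

lemma mul_qU (j m b : ℕ) (hm : 0 < m) (hb : 0 < b) :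
    (m : ℚ) * b * qU j m b = (m : ℚ) * b - 2 ^ j * m + 2 / 3 * (2 ^ (2 * j) + 2) := by
  have hm0 : (m : ℚ) ≠ 0 := by positivity
  have hb0 : (b : ℚ) ≠ 0 := by positivity
  rw [qU]
  field_simp

lemma log_bounds (b : ℕ) (hb : 2 ≤ b) :
    2 ^ Nat.log 2 (b - 1) < b ∧ b ≤ 2 ^ (Nat.log 2 (b - 1) + 1) := by
  constructor
  · have := Nat.pow_log_le_self 2 (show b - 1 ≠ 0 by omega)
    omega
  · have := Nat.lt_pow_succ_log_self (by norm_num : 1 < 2) (b - 1)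
    omega

lemma tangent (k m b : ℕ) (hm : 2 ^ k < m) (hb1 : 1 ≤ b) (hb2 : b ≤ 2 ^ (k + 1)) :
    2 ^ k * (b : ℚ) - (2 ^ (2 * k) + 2) / 3 ≤ (m : ℚ) * b * q m b := by
  have hm2 : 2 ≤ m := by have := Nat.one_le_two_pow (n := k); omega
  have hxk : (1 : ℚ) ≤ 2 ^ k := one_le_pow₀ (by norm_num)
  have h2k : (2:ℚ) ^ (2*k) = 2^k * 2^k := by rw [← pow_add]; ring_nf
  rcases eq_or_lt_of_le hb1 with h1 | h2
  · -- b = 1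
    obtain rfl : b = 1 := h1.symm
    rw [q_one m hm2]
    rw [h2k]
    push_cast
    have : ((2:ℚ)^k - 1) * (2^k - 2) ≥ 0 := by
      rcases Nat.eq_zero_or_pos k with rfl | hk
      · norm_num
      · have : (2:ℚ) ≤ 2^k := by
          have h4 : (2:ℕ)^1 ≤ 2^k := Nat.pow_le_pow_right (by norm_num) hk
          exact_mod_cast h4
        nlinarith
    nlinarith
  · -- b ≥ 2
    have hb2' : 2 ≤ b := h2
    obtain ⟨hj1, hj2⟩ := log_bounds b hb2'
    set j := Nat.log 2 (b - 1) with hj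
    have hjk : j ≤ k := by
      have : Nat.log 2 (b - 1) < k + 1 := Nat.log_lt_of_lt_pow (by omega) (by omega)
      omega
    by_cases hmW : 2 ^ (j + 1) < m
    · rw [q_eq_qW m b hb2' hmW, mul_qW j m b (by omega) (by omega)]
      rcases Nat.lt_or_ge j k with hlt | hge
      · have hBA : (2:ℚ) ^ (j+1) ≤ 2 ^ k := by
          exact_mod_cast Nat.pow_le_pow_right (by norm_num) (by omega)
        have hbB : (b:ℚ) ≤ 2 ^ (j+1) := by exact_mod_cast hj2
        have hb0 : (0:ℚ) < b := by positivity
        have hA2B : ((2:ℚ)^k - 2^(j+1)) * ((2:ℚ)^k - 2*2^(j+1)) ≥ 0 := by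
          rcases Nat.lt_or_ge (j+1) k with h2 | h2
          · have h3 : (2:ℚ)^(j+2) ≤ 2^k := by
              exact_mod_cast Nat.pow_le_pow_right (by norm_num : 1 ≤ 2) (by omega)
            rw [pow_succ] at h3
            nlinarith
          · have : j + 1 = k := by omega
            subst this
            nlinarith
        have h2j : (2:ℚ) ^ (2*j+1) * 2 = 2^(j+1) * 2^(j+1) := by
          rw [← pow_add, ← pow_succ]; congr 1; omega
        rw [h2k]
        nlinarith [hBA, hbB, hA2B, h2j]
      · -- j = k, m > 2^(k+1), b > 2^k
        have hjke : j = k := by omega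
        subst hjke
        have hbA : (2:ℚ)^j + 1 ≤ b := by exact_mod_cast hj1
        have h2j : (2:ℚ) ^ (2*j+1) = 2 * (2^j * 2^j) := by
          rw [← pow_add, pow_add, pow_add]; ring
        rw [h2j, h2k, pow_succ]
        nlinarith [hbA, hxk]
    · -- j = k, qU branch
      have hjk' : j = k := by
        have h1 : 2 ^ k < 2 ^ (j + 1) := by omega
        have := (Nat.pow_lt_pow_iff_right (a := 2) (by norm_num)).mp h1
        omega
      subst hjk'
      have hlog : Nat.log 2 (m - 1) = j := by
        apply Nat.log_eq_of_pow_le_of_lt_pow <;> omega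
      rw [q_eq_qU m b hb2' hm2 hmW, hlog, mul_qU j m b (by omega) (by omega)]
      have hbA : (2:ℚ) ^ j < b := by exact_mod_cast hj1
      have hmA : (2:ℚ) ^ j < m := by exact_mod_cast hm
      rw [h2k]
      nlinarith [hbA, hmA]

lemma two_pow_double (t : ℕ) : (2:ℚ) ^ (2 * t) = 2 ^ t * 2 ^ t := by
  rw [two_mul, pow_add]

lemma exact_eq (k m b : ℕ) (hm : 2 ^ (k + 1) < m) (hb1 : 2 ^ k ≤ b) (hb2 : b ≤ 2 ^ (k + 1)) :
    (m : ℚ) * b * q m b = 2 ^ (k + 1) * (b : ℚ) - (2 ^ (2 * (k + 1)) + 2) / 3 := by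
  have hm2 : 2 ≤ m := by have := Nat.one_le_two_pow (n := k + 1); omega
  rcases Nat.lt_or_ge (2 ^ k) b with hgt | hle
  · -- 2^k < b ≤ 2^(k+1): j = k
    have hb2' : 2 ≤ b := by have := Nat.one_le_two_pow (n := k); omega
    have hlog : Nat.log 2 (b - 1) = k :=
      Nat.log_eq_of_pow_le_of_lt_pow (by omega) (by omega)
    have hmW : 2 ^ (Nat.log 2 (b - 1) + 1) < m := by rw [hlog]; omega
    rw [q_eq_qW m b hb2' hmW, hlog, mul_qW k m b (by omega) (by omega)]
    rw [show 2*(k+1) = 2*k+1+1 by ring, pow_succ (2:ℚ) (2*k+1)]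
    ring
  · -- b = 2^k
    have hbe : b = 2 ^ k := le_antisymm hle hb1
    subst hbe
    rcases Nat.eq_zero_or_pos k with rfl | hk
    · -- k = 0, b = 1
      norm_num [q_one m hm2]
    · obtain ⟨t, rfl⟩ : ∃ t, k = t + 1 := ⟨k - 1, by omega⟩
      have hb2' : 2 ≤ 2 ^ (t + 1) := by
        have := Nat.one_le_two_pow (n := t); calc 2 = 2*1 := rfl
        _ ≤ 2 ^ t * 2 := by omega
        _ = 2 ^ (t+1) := (pow_succ 2 t).symm
      have hpt : 2 ^ t ≤ 2 ^ (t+1) - 1 := by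
        have : 2 ^ (t+1) = 2 ^ t * 2 := pow_succ 2 t
        have := Nat.one_le_two_pow (n := t)
        omega
      have hlog : Nat.log 2 (2 ^ (t + 1) - 1) = t :=
      Nat.log_eq_of_pow_le_of_lt_pow hpt (by omega)
      have hmW : 2 ^ (Nat.log 2 (2 ^ (t+1) - 1) + 1) < m := by
        rw [hlog]
        have : (2:ℕ) ^ (t+1) ≤ 2 ^ (t+1+1) := Nat.pow_le_pow_right (by norm_num) (by omega)
        omega
      rw [q_eq_qW m (2^(t+1)) hb2' hmW, hlog, mul_qW t m (2^(t+1)) (by omega) (by omega)]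
      push_cast
      rw [show 2*(t+1+1) = 2*t+4 by ring, show 2*t+1 = 2*t+1 from rfl,
        pow_add (2:ℚ) (2*t) 4, pow_add (2:ℚ) (2*t) 1, two_pow_double,
        pow_succ (2:ℚ) (t+1), pow_succ (2:ℚ) t]
      ring

lemma expand_aux (k n m b : ℕ) (Q1 Q2 : ℚ) (hb : b ≤ n) (hn : 0 < n) (hm0 : 0 < m) :
    qU k n m - (1 - (b : ℚ) / (n : ℚ) * Q1 - ((n - b : ℕ) : ℚ) / (n : ℚ) * Q2)
      = ((m : ℚ) * b * Q1 + (m : ℚ) * ((n - b : ℕ) : ℚ) * Q2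
          - (2 ^ k * (n : ℚ) - 2 / 3 * (2 ^ (2 * k) + 2))) / ((m : ℚ) * (n : ℚ)) := by
  have hcast : ((n - b : ℕ) : ℚ) = (n : ℚ) - b := by
    rw [Nat.cast_sub hb]
  have hn0 : (n : ℚ) ≠ 0 := by positivity
  have hm0' : (m : ℚ) ≠ 0 := by positivity
  rw [qU, hcast]
  field_simp
  ring

/-- The upper-hand lemma: if Player 1 has the upper hand at level `k`, then every bid
`1 ≤ b ≤ n - 1` yields payoff at most `qU k n m`, with equality at the half-splitting
bid `b = ⌊n/2⌋`; consequently `qU k n m` is the maximum over all bids. -/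
theorem q_upper_hand_recurrence
    (n m k : ℕ) (hn1 : 2 ^ k < n) (hn2 : n ≤ 2 ^ (k + 1)) (hm : 2 ^ k < m) :
    (∀ b : ℕ, 1 ≤ b → b ≤ n - 1 →
      1 - (b : ℚ) / (n : ℚ) * q m b - ((n - b : ℕ) : ℚ) / (n : ℚ) * q m (n - b)
        ≤ qU k n m) ∧
    (1 - ((n / 2 : ℕ) : ℚ) / (n : ℚ) * q m (n / 2)
      - ((n - n / 2 : ℕ) : ℚ) / (n : ℚ) * q m (n - n / 2) = qU k n m) ∧
    IsGreatest
      ((fun b : ℕ =>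
        1 - (b : ℚ) / (n : ℚ) * q m b - ((n - b : ℕ) : ℚ) / (n : ℚ) * q m (n - b)) ''
        (Set.Icc 1 (n - 1)))
      (qU k n m) := by

  have hk1 : 1 ≤ 2 ^ k := Nat.one_le_two_pow
  have hn2' : 2 ≤ n := by omega
  have hm2 : 2 ≤ m := by omega
  have hn0 : 0 < n := by omega
  have hm0 : 0 < m := by omega
  have hub : ∀ b : ℕ, 1 ≤ b → b ≤ n - 1 →
      1 - (b : ℚ) / (n : ℚ) * q m b - ((n - b : ℕ) : ℚ) / (n : ℚ) * q m (n - b)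
        ≤ qU k n m := by
    intro b hb1 hb2
    have hbn : b ≤ 2 ^ (k + 1) := by omega
    have hc1 : 1 ≤ n - b := by omega
    have hcn : n - b ≤ 2 ^ (k + 1) := by omega
    have t1 := tangent k m b hm hb1 hbn
    have t2 := tangent k m (n - b) hm hc1 hcn
    have hcast : ((n - b : ℕ) : ℚ) = (n : ℚ) - b := by
      rw [Nat.cast_sub (by omega)]
    rw [← sub_nonneg, expand_aux k n m b _ _ (by omega) hn0 hm0]
    apply div_nonneg _ (by positivity)
    have hX : (2:ℚ) ^ k * ((n : ℚ) - (b : ℚ)) = 2 ^ k * (n : ℚ) - 2 ^ k * (b : ℚ) := by ring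
    rw [hcast, hX] at t2
    rw [hcast]
    linarith [t1, t2]
  have heq : 1 - ((n / 2 : ℕ) : ℚ) / (n : ℚ) * q m (n / 2)
      - ((n - n / 2 : ℕ) : ℚ) / (n : ℚ) * q m (n - n / 2) = qU k n m := by
    rcases Nat.eq_zero_or_pos k with rfl | hk
    · -- k = 0 : n = 2
      obtain rfl : n = 2 := by omega
      norm_num [q_one m hm2, qU]
      have hm0' : (m : ℚ) ≠ 0 := by positivity
      field_simp
      ring
    · obtain ⟨k', rfl⟩ : ∃ t, k = t + 1 := ⟨k - 1, by omega⟩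
      have hpow : 2 ^ (k' + 1) = 2 * 2 ^ k' := by ring
      have hpow2 : 2 ^ (k' + 1 + 1) = 4 * 2 ^ k' := by ring
      have hb1 : 2 ^ k' ≤ n / 2 := by omega
      have hb2 : n / 2 ≤ 2 ^ (k' + 1) := by omega
      have hc1 : 2 ^ k' ≤ n - n / 2 := by omega
      have hc2 : n - n / 2 ≤ 2 ^ (k' + 1) := by omega
      have e1 := exact_eq k' m (n / 2) hm hb1 hb2
      have e2 := exact_eq k' m (n - n / 2) hm hc1 hc2
      have hsum : ((n / 2 : ℕ) : ℚ) + ((n - n / 2 : ℕ) : ℚ) = (n : ℚ) := by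
        have : n / 2 + (n - n / 2) = n := by omega
        exact_mod_cast congrArg (Nat.cast : ℕ → ℚ) this
      have key : qU (k' + 1) n m - (1 - ((n / 2 : ℕ) : ℚ) / (n : ℚ) * q m (n / 2)
          - ((n - n / 2 : ℕ) : ℚ) / (n : ℚ) * q m (n - n / 2)) = 0 := by
        rw [expand_aux (k' + 1) n m (n / 2) _ _ (by omega) hn0 hm0]
        have hnum : (m : ℚ) * (n / 2 : ℕ) * q m (n / 2)
            + (m : ℚ) * ((n - n / 2 : ℕ) : ℚ) * q m (n - n / 2)
            - (2 ^ (k' + 1) * (n : ℚ) - 2 / 3 * (2 ^ (2 * (k' + 1)) + 2)) = 0 := by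
          rw [e1, e2]
          linear_combination (2:ℚ) ^ (k' + 1) * hsum
        rw [hnum, zero_div]
      linarith [key]
  refine ⟨hub, heq, ⟨n / 2, ⟨by omega, by omega⟩, heq⟩, ?_⟩
  rintro x ⟨b, ⟨hb1, hb2⟩, rfl⟩
  exact hub b hb1 hb2
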